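/- Let n ≥ 3 be a natural number and let p be a prime with p > 2^(2^(2^(2^(2^(9+n))))). Then N_n(ℤ_p) = 2n - 1; that is, the minimum of |A+A| over all n-element subsets A of the set of squares of the field ℤ/pℤ equals 2n - 1. -/

import Mathlib

open Pointwise Polynomial Finset Module

namespace SqAP

/-! ### Parameters -/

def JJ (n : ℕ) : ℕ := (n + 2) * 2 ^ (n + 5)
def MM (n : ℕ) : ℕ := 2 * JJ n - 2
def DD (p n : ℕ) : ℕ := (p - n - 1) / 2
def EE (p n : ℕ) : ℕ := JJ n + DD p n + MM n * n + 1

/-! ### Numeric lemmas -/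

lemma succ_le_two_pow (n : ℕ) : n + 1 ≤ 2 ^ n := by
  induction n with
  | zero => simp
  | succ k ih =>
    have : 2 ^ (k + 1) = 2 * 2 ^ k := by ring
    omega

lemma JJ_le_pow (n : ℕ) : JJ n ≤ 2 ^ (2 * n + 6) := by
  have h1 : n + 2 ≤ 2 ^ (n + 1) := by
    have := succ_le_two_pow (n + 1)
    have : 2 ^ (n+1) = 2 * 2 ^ n := by ring
    have := succ_le_two_pow n
    omega
  calc JJ n = (n + 2) * 2 ^ (n + 5) := rfl
    _ ≤ 2 ^ (n + 1) * 2 ^ (n + 5) := Nat.mul_le_mul_right _ h1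
    _ = 2 ^ (2 * n + 6) := by rw [← pow_add]; ring_nf

lemma JJ_pos (n : ℕ) : 1 ≤ JJ n := by
  have : 0 < (n + 2) * 2 ^ (n + 5) := by positivity
  exact this

lemma MM_lt_p {p n : ℕ} (hbig : 2 ^ (20 * (n + 1)) ≤ p) : MM n < p := by
  have h1 : MM n ≤ 2 * JJ n := Nat.sub_le _ _
  have h2 : 2 * JJ n ≤ 2 * 2 ^ (2 * n + 6) := by
    have := JJ_le_pow n; omega
  have h3 : (2:ℕ) * 2 ^ (2 * n + 6) = 2 ^ (2 * n + 7) := by ring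
  have h4 : (2:ℕ) ^ (2 * n + 7) < 2 ^ (20 * (n + 1)) :=
    Nat.pow_lt_pow_right one_lt_two (by omega)
  omega

lemma twoDD_le {p n : ℕ} : 2 * DD p n ≤ p := by
  have : DD p n ≤ (p - n - 1) / 2 := le_rfl
  have h2 := Nat.div_mul_le_self (p - n - 1) 2
  have : 2 * ((p - n - 1) / 2) ≤ p - n - 1 := by omega
  unfold DD; omega

lemma n_small {p n : ℕ} (hbig : 2 ^ (20 * (n + 1)) ≤ p) : 4 * n + 4 ≤ p := by
  have h1 : n + 1 ≤ 2 ^ n := succ_le_two_pow n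
  have h2 : (2:ℕ) ^ n * 2 ^ 3 ≤ 2 ^ (20 * (n+1)) := by
    rw [← pow_add]; exact Nat.pow_le_pow_right (by norm_num) (by omega)
  have : (2:ℕ) ^ 3 = 8 := by norm_num
  nlinarith [Nat.pow_le_pow_right (show 1 ≤ 2 by norm_num) (show n ≤ 20 * (n+1) by omega)]

lemma twoDD_add_n_lt {p n : ℕ} (hbig : 2 ^ (20 * (n + 1)) ≤ p) : 2 * DD p n + n < p := by
  have h1 : 2 * ((p - n - 1) / 2) ≤ p - n - 1 := by
    have := Nat.div_mul_le_self (p - n - 1) 2; omega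
  have h2 := n_small hbig
  unfold DD; omega

lemma DD_big {p n : ℕ} (hn : 1 ≤ n) (hbig : 2 ^ (20 * (n + 1)) ≤ p) :
    JJ n * JJ n * (2 * n + 1) ≤ DD p n := by
  have hJ : JJ n ≤ 2 ^ (2 * n + 6) := JJ_le_pow n
  have h2n : 2 * n + 1 ≤ 2 ^ (n + 1) := by
    have := succ_le_two_pow n
    have : (2:ℕ) ^ (n+1) = 2 * 2 ^ n := by ring
    omega
  have hprod : JJ n * JJ n * (2 * n + 1) ≤ 2 ^ (5 * n + 13) := by
    calc JJ n * JJ n * (2 * n + 1) ≤ 2 ^ (2*n+6) * 2 ^ (2*n+6) * 2 ^ (n+1) := by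
          exact Nat.mul_le_mul (Nat.mul_le_mul hJ hJ) h2n
      _ = 2 ^ (5 * n + 13) := by rw [← pow_add, ← pow_add]; ring_nf
  have hp' : 2 * 2 ^ (5 * n + 13) + n + 1 ≤ p := by
    have : (2:ℕ) * 2 ^ (5*n+13) = 2 ^ (5*n+14) := by ring
    have hpow : (2:ℕ) ^ (5*n+14) + 2 ^ (5*n+14) ≤ 2 ^ (5*n+15) := by
      have : (2:ℕ) ^ (5*n+15) = 2 ^ (5*n+14) + 2 ^ (5*n+14) := by ring
      omega
    have hnsmall : n + 1 ≤ 2 ^ (5*n+14) := by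
      have := succ_le_two_pow n
      exact le_trans this (Nat.pow_le_pow_right (by norm_num) (by omega))
    have : (2:ℕ) ^ (5*n+15) ≤ 2 ^ (20*(n+1)) :=
      Nat.pow_le_pow_right (by norm_num) (by omega)
    omega
  have : JJ n * JJ n * (2*n+1) * 2 ≤ p - n - 1 := by omega
  unfold DD
  exact Nat.le_div_iff_mul_le (by norm_num) |>.mpr this

lemma dim_ineq {p n : ℕ} (hn : 1 ≤ n) (hbig : 2 ^ (20 * (n + 1)) ≤ p) :
    MM n * EE p n < (JJ n + JJ n) * (DD p n + 1) := by
  have hJ1 : 1 ≤ JJ n := JJ_pos n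
  have hM2 : MM n + 2 = 2 * JJ n := by unfold MM; omega
  have hMle : MM n ≤ 2 * JJ n := by omega
  have hEE : EE p n = (JJ n + MM n * n) + (DD p n + 1) := by unfold EE; ring
  have hlt : JJ n * (JJ n + MM n * n) < EE p n := by
    have h1 : JJ n * (JJ n + MM n * n) ≤ JJ n * JJ n + JJ n * (2 * JJ n) * n := by
      have : JJ n * (MM n * n) ≤ JJ n * ((2 * JJ n) * n) :=
        Nat.mul_le_mul_left _ (Nat.mul_le_mul_right _ hMle)
      calc JJ n * (JJ n + MM n * n) = JJ n * JJ n + JJ n * (MM n * n) := by ring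
        _ ≤ JJ n * JJ n + JJ n * ((2 * JJ n) * n) := by omega
        _ = JJ n * JJ n + JJ n * (2 * JJ n) * n := by ring
    have h2 : JJ n * JJ n + JJ n * (2 * JJ n) * n = JJ n * JJ n * (2 * n + 1) := by ring
    have h3 := DD_big hn hbig
    omega
  -- key identities
  have id2 : (MM n + 2) * EE p n = MM n * EE p n + 2 * EE p n := by ring
  have id1 : (MM n + 2) * EE p n
      = 2 * (JJ n * (JJ n + MM n * n)) + (JJ n + JJ n) * (DD p n + 1) := by
    rw [hM2, hEE]; ring
  have h2lt : 2 * (JJ n * (JJ n + MM n * n)) < 2 * EE p n := by omega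
  omega

lemma MM_big (n : ℕ) : (n + 1) * 2 ^ (n + 6) ≤ MM n := by
  have : MM n = (n + 2) * 2 ^ (n + 6) - 2 := by
    unfold MM JJ
    have : 2 * ((n+2) * 2 ^ (n+5)) = (n+2) * 2 ^ (n+6) := by ring
    omega
  have h2 : (2:ℕ) ≤ 2 ^ (n + 6) := by
    calc (2:ℕ) = 2^1 := by norm_num
    _ ≤ 2 ^ (n+6) := Nat.pow_le_pow_right (by norm_num) (by omega)
  have h3 : (n + 2) * 2 ^ (n+6) = (n+1) * 2 ^ (n+6) + 2 ^ (n+6) := by ring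
  omega

lemma MM_pos (n : ℕ) : 0 < MM n := by
  have := MM_big n
  have : 0 < (n+1) * 2 ^ (n+6) := by positivity
  omega

lemma final_numeric {p n : ℕ} (hn : 1 ≤ n) (hbig : 2 ^ (20 * (n + 1)) ≤ p) :
    2 ^ n * ((n + 1) * p + 3 * n * MM n) < MM n * p := by
  have hM := MM_big n
  have hMpos := MM_pos n
  have hppos : 0 < p := lt_of_lt_of_le (by positivity) hbig
  have h1 : 2 ^ (n+1) * (n + 1) ≤ MM n := by
    have : (2:ℕ)^(n+1) * (n+1) ≤ (n+1) * 2 ^ (n+6) := by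
      have : (2:ℕ)^(n+1) ≤ 2^(n+6) := Nat.pow_le_pow_right (by norm_num) (by omega)
      nlinarith
    omega
  have h2 : 2 ^ (n+1) * (3 * n) < p := by
    have ha : (2:ℕ)^(n+1) * (3*n) ≤ 2^(n+1) * (4 * 2 ^ n) := by
      have : 3 * n ≤ 4 * 2 ^ n := by
        have := succ_le_two_pow n; omega
      exact Nat.mul_le_mul_left _ this
    have hb : (2:ℕ)^(n+1) * (4 * 2^n) = 2 ^ (2*n+3) := by
      rw [show (4:ℕ) = 2^2 by norm_num, ← pow_add, ← pow_add]; ring_nf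
    have hc : (2:ℕ) ^ (2*n+3) < 2 ^ (20*(n+1)) :=
      Nat.pow_lt_pow_right one_lt_two (by omega)
    omega
  -- 2*(LHS) < 2*(RHS)
  have key : 2 * (2 ^ n * ((n + 1) * p + 3 * n * MM n)) < 2 * (MM n * p) := by
    have e1 : 2 * (2 ^ n * ((n + 1) * p + 3 * n * MM n))
        = (2^(n+1) * (n+1)) * p + (2^(n+1) * (3*n)) * MM n := by ring
    have e2 : (2^(n+1) * (n+1)) * p ≤ MM n * p := Nat.mul_le_mul_right _ h1
    have e3 : (2^(n+1) * (3*n)) * MM n < p * MM n :=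
      Nat.mul_lt_mul_of_lt_of_le h2 le_rfl hMpos
    have e4 : p * MM n = MM n * p := by ring
    omega
  omega

/-! ### Hasse derivative lemmas -/

variable {p : ℕ} [Fact p.Prime]

lemma choose_mul_p_cast (j l : ℕ) (h0 : 0 < l) (hlp : l < p) :
    (((j * p).choose l : ℕ) : ZMod p) = 0 := by
  rcases Nat.eq_zero_or_pos j with hj | hj
  · subst hj
    simp [Nat.choose_eq_zero_of_lt h0]
  · have hppos := (Fact.out : p.Prime).pos
    have hN : 1 ≤ j * p := Nat.mul_pos hj hppos
    have key := Nat.add_one_mul_choose_eq (j * p - 1) (l - 1)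
    have e1 : (j * p - 1 + 1) = j * p := by omega
    have e2 : (l - 1 + 1) = l := by omega
    rw [e1, e2] at key
    have h2 : (((j * p).choose l * l : ℕ) : ZMod p) = 0 := by
      rw [← key]
      push_cast
      simp [ZMod.natCast_self]
    have hl : ((l : ℕ) : ZMod p) ≠ 0 := by
      rw [Ne, ZMod.natCast_eq_zero_iff]
      intro hdvd
      exact absurd (Nat.le_of_dvd h0 hdvd) (by omega)
    push_cast at h2
    exact (mul_eq_zero.mp h2).resolve_right hl

lemma hasseDeriv_mul_X_pow_block (g : (ZMod p)[X]) (k j : ℕ) (hk : k < p) :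
    hasseDeriv k (g * X ^ (j * p)) = hasseDeriv k g * X ^ (j * p) := by
  rw [hasseDeriv_mul]
  rw [Finset.sum_eq_single (k, 0)]
  · simp
  · rintro ⟨a, b⟩ hmem hne
    have hab : a + b = k := Finset.HasAntidiagonal.mem_antidiagonal.mp hmem
    have hb : 0 < b := by
      rcases Nat.eq_zero_or_pos b with hb0 | hb0
      · exfalso; apply hne; subst hb0
        have : a = k := by omega
        subst this; rfl
      · exact hb0
    have hbp : b < p := by omega
    have hzero : hasseDeriv b (X ^ (j * p) : (ZMod p)[X]) = 0 := by
      rw [X_pow_eq_monomial, hasseDeriv_monomial, choose_mul_p_cast j b hb hbp]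
      simp
    rw [hzero, mul_zero]
  · intro h; exact absurd (Finset.HasAntidiagonal.mem_antidiagonal.mpr (by omega)) h

lemma pow_X_sub_C_dvd_of_hasse {R : Type*} [CommRing R] (F : R[X]) (a : R) (m : ℕ)
    (h : ∀ k < m, (Polynomial.hasseDeriv k F).eval a = 0) : (X - C a) ^ m ∣ F := by
  conv_rhs => rw [← Polynomial.sum_taylor_eq F a]
  rw [Polynomial.sum_def]
  apply Finset.dvd_sum
  intro i _
  by_cases him : i < m
  · have hc : (taylor a F).coeff i = 0 := by rw [taylor_coeff]; exact h i him
    rw [hc]; simp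
  · exact Dvd.dvd.mul_left (pow_dvd_pow _ (le_of_not_gt him)) _

/-! ### The phi operator -/

noncomputable def phi (f : (ZMod p)[X]) (N : ℕ) : ℕ → (ZMod p)[X] → (ZMod p)[X]
  | 0, g => g
  | k + 1, g => (((k + 1 : ℕ) : ZMod p))⁻¹ •
      ((((N - k : ℕ) : ZMod p)) • (derivative f * phi f N k g)
        + f * derivative (phi f N k g))

lemma phi_add (f : (ZMod p)[X]) (N k : ℕ) (g₁ g₂ : (ZMod p)[X]) :
    phi f N k (g₁ + g₂) = phi f N k g₁ + phi f N k g₂ := by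
  induction k with
  | zero => rfl
  | succ k ih =>
    simp only [phi, ih, derivative_add, mul_add, smul_add]
    module

lemma phi_smul (f : (ZMod p)[X]) (N k : ℕ) (c : ZMod p) (g : (ZMod p)[X]) :
    phi f N k (c • g) = c • phi f N k g := by
  induction k with
  | zero => rfl
  | succ k ih =>
    simp only [phi, ih, derivative_smul, mul_smul_comm, smul_add]
    module

lemma phi_natDegree (f : (ZMod p)[X]) (N k : ℕ) (g : (ZMod p)[X]) (d : ℕ)
    (hg : g.natDegree ≤ d) : (phi f N k g).natDegree ≤ d + k * f.natDegree := by
  induction k with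
  | zero => simpa [phi]
  | succ k ih =>
    have h1 : (derivative f * phi f N k g).natDegree ≤ d + (k + 1) * f.natDegree := by
      refine le_trans natDegree_mul_le ?_
      have := natDegree_derivative_le f
      have e : d + (k+1) * f.natDegree = f.natDegree + (d + k * f.natDegree) := by ring
      omega
    have h2 : (f * derivative (phi f N k g)).natDegree ≤ d + (k + 1) * f.natDegree := by
      refine le_trans natDegree_mul_le ?_
      have := natDegree_derivative_le (phi f N k g)
      have e : d + (k+1) * f.natDegree = f.natDegree + (d + k * f.natDegree) := by ring
      omega
    refine le_trans (natDegree_smul_le _ _) (le_trans (natDegree_add_le _ _) ?_)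
    have h3 := natDegree_smul_le (((N - k : ℕ) : ZMod p)) (derivative f * phi f N k g)
    rw [max_le_iff]
    exact ⟨le_trans h3 h1, h2⟩

lemma phi_hasse (f : (ZMod p)[X]) (N : ℕ) :
    ∀ (k : ℕ), k ≤ N → k < p → ∀ g : (ZMod p)[X],
      hasseDeriv k (f ^ N * g) = f ^ (N - k) * phi f N k g := by
  intro k
  induction k with
  | zero => intro _ _ g; simp [phi]
  | succ k ih =>
    intro hk hkp g
    have IH := ih (by omega) (by omega) g
    have hD : derivative (hasseDeriv k (f ^ N * g)) = (k + 1) • hasseDeriv (k + 1) (f ^ N * g) := by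
      have hcomp := Polynomial.hasseDeriv_comp (R := ZMod p) 1 k
      have h2 := DFunLike.congr_fun hcomp (f ^ N * g)
      simp only [LinearMap.comp_apply, LinearMap.smul_apply, hasseDeriv_one',
        Nat.choose_one_right] at h2
      rw [Nat.add_comm 1 k] at h2
      exact h2
    have e : N - k = (N - (k + 1)) + 1 := by omega
    have hL : derivative (hasseDeriv k (f ^ N * g))
        = f ^ (N - (k + 1)) * ((((N - k : ℕ) : ZMod p)) • (derivative f * phi f N k g)
            + f * derivative (phi f N k g)) := by
      rw [IH]
      calc derivative (f ^ (N - k) * phi f N k g)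
          = C ((N - k : ℕ) : ZMod p) * f ^ (N - k - 1) * derivative f * phi f N k g
            + f ^ (N - k) * derivative (phi f N k g) := by
            rw [derivative_mul, derivative_pow]
        _ = _ := by
            have hpow : f ^ (N - k) = f ^ (N - (k + 1)) * f := by rw [e, pow_succ]
            rw [smul_eq_C_mul, hpow, Nat.sub_sub]
            ring
    have hc : (((k + 1 : ℕ) : ZMod p)) ≠ 0 := by
      rw [Ne, ZMod.natCast_eq_zero_iff]
      intro hdvd
      have := Nat.le_of_dvd (by omega) hdvd
      omega
    have hmain : (((k + 1 : ℕ) : ZMod p)) • hasseDeriv (k + 1) (f ^ N * g)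
        = f ^ (N - (k + 1)) * ((((N - k : ℕ) : ZMod p)) • (derivative f * phi f N k g)
            + f * derivative (phi f N k g)) := by
      rw [Nat.cast_smul_eq_nsmul, ← hD, hL]
    calc hasseDeriv (k + 1) (f ^ N * g)
        = (((k + 1 : ℕ) : ZMod p))⁻¹ • ((((k + 1 : ℕ) : ZMod p)) • hasseDeriv (k + 1) (f ^ N * g)) :=
          (inv_smul_smul₀ hc _).symm
      _ = (((k + 1 : ℕ) : ZMod p))⁻¹ • (f ^ (N - (k + 1)) * ((((N - k : ℕ) : ZMod p)) • (derivative f * phi f N k g)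
            + f * derivative (phi f N k g))) := by rw [hmain]
      _ = f ^ (N - (k + 1)) * phi f N (k + 1) g := by
          simp only [phi]
          rw [mul_smul_comm]

/-! ### Independence -/

lemma fp_eq_expand (f : (ZMod p)[X]) : f ^ p = Polynomial.expand (ZMod p) p f := by
  have h := Polynomial.map_frobenius_expand (p := p) f
  rw [ZMod.frobenius_zmod, Polynomial.map_id] at h
  exact h.symm

lemma X_pow_p_dvd_expand_sub (f : (ZMod p)[X]) :
    (X : (ZMod p)[X]) ^ p ∣ Polynomial.expand (ZMod p) p f - C (f.coeff 0) := by
  rw [Polynomial.X_pow_dvd_iff]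
  intro d hd
  have hp0 : 0 < p := (Fact.out : p.Prime).pos
  rw [Polynomial.coeff_sub, Polynomial.coeff_expand hp0]
  rcases Nat.eq_zero_or_pos d with rfl | hdpos
  · simp
  · have hnd : ¬ p ∣ d := fun hdl => absurd (Nat.le_of_dvd hdpos hdl) (by omega)
    rw [if_neg hnd, Polynomial.coeff_C, if_neg (by omega)]
    simp

lemma indep_core {n : ℕ} (hodd : p % 2 = 1) (S : Finset (ZMod p)) (hS0 : (0 : ZMod p) ∉ S)
    (hSne : S.Nonempty)
    (hfn : S.card ≤ n) (hD2 : 2 * DD p n + n < p)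
    (u v : (ZMod p)[X]) (hu : u.natDegree ≤ DD p n) (hv : v.natDegree ≤ DD p n)
    (hdvd : (X : (ZMod p)[X]) ^ p ∣ u + (∏ c ∈ S, (X + C c)) ^ ((p - 1) / 2) * v) :
    u = 0 ∧ v = 0 := by
  set h := (p - 1) / 2 with hhdef
  set f : (ZMod p)[X] := ∏ c ∈ S, (X + C c) with hf
  have h2h : 2 * h + 1 = p := by omega
  have hfmonic : f.Monic := monic_prod_of_monic _ _ fun c _ => monic_X_add_C c
  have hfne : f ≠ 0 := hfmonic.ne_zero
  have hfdeg : f.natDegree = S.card := by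
    rw [hf, natDegree_prod_of_monic _ _ fun c _ => monic_X_add_C c]
    simp [natDegree_X_add_C]
  have hc0 : f.coeff 0 = ∏ c ∈ S, c := by
    rw [coeff_zero_eq_eval_zero, hf, eval_prod]
    simp
  have hc0ne : f.coeff 0 ≠ 0 := by
    rw [hc0]
    exact Finset.prod_ne_zero_iff.mpr fun c hc h0 => hS0 (h0 ▸ hc)
  set w : (ZMod p)[X] := u + f ^ h * v with hw
  have hu' : u = w - f ^ h * v := by rw [hw]; ring
  have key : f * u ^ 2 - C (f.coeff 0) * v ^ 2
      = f * w ^ 2 - 2 * (f ^ (h + 1) * w * v) + (f ^ p - C (f.coeff 0)) * v ^ 2 := by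
    rw [hu', show f ^ p = f ^ (2 * h + 1) by rw [h2h]]
    ring
  have hXw : (X : (ZMod p)[X]) ^ p ∣ w := hdvd
  have hdvd2 : (X : (ZMod p)[X]) ^ p ∣ f * u ^ 2 - C (f.coeff 0) * v ^ 2 := by
    rw [key]
    apply dvd_add
    · apply dvd_sub
      · exact dvd_mul_of_dvd_right (dvd_pow hXw two_ne_zero) _
      · exact ((hXw.mul_left _).mul_right _).mul_left 2
    · rw [show (f : (ZMod p)[X]) ^ p = Polynomial.expand (ZMod p) p f from fp_eq_expand f]
      exact (X_pow_p_dvd_expand_sub f).mul_right _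
  have hfdegn : f.natDegree ≤ n := hfdeg ▸ hfn
  have hdeg : (f * u ^ 2 - C (f.coeff 0) * v ^ 2).natDegree < p := by
    apply lt_of_le_of_lt (natDegree_sub_le _ _)
    rw [max_lt_iff]
    constructor
    · apply lt_of_le_of_lt natDegree_mul_le
      have h2 : (u ^ 2).natDegree ≤ 2 * DD p n := by
        refine le_trans natDegree_pow_le ?_
        omega
      omega
    · apply lt_of_le_of_lt natDegree_mul_le
      have h2 : (v ^ 2).natDegree ≤ 2 * DD p n := by
        refine le_trans natDegree_pow_le ?_
        omega
      have h3 : (C (f.coeff 0)).natDegree = 0 := natDegree_C _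
      omega
  have heq : f * u ^ 2 = C (f.coeff 0) * v ^ 2 := by
    by_contra hne
    have hsubne : f * u ^ 2 - C (f.coeff 0) * v ^ 2 ≠ 0 := sub_ne_zero.mpr hne
    have hle := Polynomial.natDegree_le_of_dvd hdvd2 hsubne
    rw [natDegree_X_pow] at hle
    omega
  by_cases hv0 : v = 0
  · constructor
    · have h0 : f * u ^ 2 = 0 := by rw [heq, hv0]; ring
      rcases mul_eq_zero.mp h0 with h' | h'
      · exact absurd h' hfne
      · exact pow_eq_zero_iff two_ne_zero |>.mp h'
    · exact hv0
  · exfalso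
    have hu0 : u ≠ 0 := by
      intro hu0
      apply hv0
      have h0 : C (f.coeff 0) * v ^ 2 = 0 := by rw [← heq, hu0]; ring
      rcases mul_eq_zero.mp h0 with h' | h'
      · exact absurd (Polynomial.C_eq_zero.mp h') hc0ne
      · exact pow_eq_zero_iff two_ne_zero |>.mp h'
    obtain ⟨cs, hcs⟩ := hSne
    set g : (ZMod p)[X] := ∏ c ∈ S.erase cs, (X + C c) with hg
    have hfg : f = (X + C cs) * g := by
      rw [hf, hg]
      exact (Finset.mul_prod_erase S (fun c => X + C c) hcs).symm
    have hgroot : ¬ g.IsRoot (-cs) := by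
      rw [hg, Polynomial.IsRoot, eval_prod]
      intro h0
      obtain ⟨c, hc, hc0'⟩ := Finset.prod_eq_zero_iff.mp h0
      simp only [eval_add, eval_X, eval_C] at hc0'
      have hccs : c = cs := by linear_combination hc0'
      exact (Finset.mem_erase.mp hc).1 hccs
    have hXC : (X + C cs : (ZMod p)[X]) = X - C (-cs) := by rw [map_neg, sub_neg_eq_add]
    have hfu2 : f * u ^ 2 ≠ 0 := mul_ne_zero hfne (pow_ne_zero _ hu0)
    have e1 : rootMultiplicity (-cs) (f * u ^ 2)
        = rootMultiplicity (-cs) f + 2 * rootMultiplicity (-cs) u := by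
      rw [Polynomial.rootMultiplicity_mul hfu2, sq,
        Polynomial.rootMultiplicity_mul (mul_ne_zero hu0 hu0)]
      ring
    have e2 : rootMultiplicity (-cs) f = 1 := by
      have hXg : (X + C cs) * g ≠ 0 := hfg ▸ hfne
      rw [hfg, Polynomial.rootMultiplicity_mul hXg, hXC,
        Polynomial.rootMultiplicity_X_sub_C_self,
        Polynomial.rootMultiplicity_eq_zero hgroot]
    have e3 : rootMultiplicity (-cs) (C (f.coeff 0) * v ^ 2) = 2 * rootMultiplicity (-cs) v := by
      have hCne : (C (f.coeff 0) : (ZMod p)[X]) ≠ 0 := fun h' => hc0ne (Polynomial.C_eq_zero.mp h')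
      rw [Polynomial.rootMultiplicity_mul (mul_ne_zero hCne (pow_ne_zero _ hv0)),
        Polynomial.rootMultiplicity_eq_zero (by simp [Polynomial.IsRoot, hc0ne]), sq,
        Polynomial.rootMultiplicity_mul (mul_ne_zero hv0 hv0)]
      ring
    rw [heq, e3, e2] at e1
    omega

lemma indep {n : ℕ} (hodd : p % 2 = 1) (S : Finset (ZMod p)) (hS0 : (0 : ZMod p) ∉ S)
    (hSne : S.Nonempty)
    (hfn : S.card ≤ n) (hD2 : 2 * DD p n + n < p)
    {J' : ℕ} (u v : Fin J' → (ZMod p)[X])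
    (hu : ∀ j, (u j).natDegree ≤ DD p n) (hv : ∀ j, (v j).natDegree ≤ DD p n)
    (hsum : ∑ j, (u j + (∏ c ∈ S, (X + C c)) ^ ((p - 1) / 2) * v j) * X ^ ((j : ℕ) * p) = 0) :
    ∀ j, u j = 0 ∧ v j = 0 := by
  set h := (p - 1) / 2 with hhdef
  set f : (ZMod p)[X] := ∏ c ∈ S, (X + C c) with hf
  by_contra hbad
  rw [not_forall] at hbad
  obtain ⟨j₀, hj₀⟩ := hbad
  set bad : Finset (Fin J') := Finset.univ.filter (fun j => ¬(u j = 0 ∧ v j = 0)) with hbadset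
  have hbne : bad.Nonempty := ⟨j₀, by simp only [hbadset, Finset.mem_filter]; exact ⟨Finset.mem_univ _, hj₀⟩⟩
  set j₁ := bad.min' hbne with hj₁
  have hj₁mem : j₁ ∈ bad := Finset.min'_mem _ _
  have hmin : ∀ j : Fin J', j < j₁ → (u j = 0 ∧ v j = 0) := by
    intro j hj
    by_contra hc
    have hle : j₁ ≤ j := Finset.min'_le _ _ (by
      simp only [hbadset, Finset.mem_filter]; exact ⟨Finset.mem_univ _, hc⟩)
    exact absurd hj (not_lt.mpr hle)
  have hcoeff : ∀ r < p, (u j₁ + f ^ h * v j₁).coeff r = 0 := by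
    intro r hr
    have h0 := congrArg (fun q : (ZMod p)[X] => q.coeff ((j₁ : ℕ) * p + r)) hsum
    simp only [Polynomial.finset_sum_coeff, Polynomial.coeff_zero] at h0
    have hothers : ∀ j : Fin J', j ∈ Finset.univ → j ≠ j₁ →
        ((u j + f ^ h * v j) * X ^ ((j : ℕ) * p)).coeff ((j₁ : ℕ) * p + r) = 0 := by
      intro j _ hjne
      rcases lt_or_gt_of_ne hjne with hlt | hgt
      · rw [(hmin j hlt).1, (hmin j hlt).2]
        simp
      · rw [Polynomial.coeff_mul_X_pow', if_neg]
        intro hle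
        have h1 : ((j₁ : ℕ) + 1) ≤ (j : ℕ) := hgt
        have h2 : ((j₁ : ℕ) + 1) * p ≤ (j : ℕ) * p := Nat.mul_le_mul_right _ h1
        have h3 : ((j₁ : ℕ) + 1) * p = (j₁ : ℕ) * p + p := by ring
        omega
    have hmain := Finset.sum_eq_single_of_mem j₁ (Finset.mem_univ _) hothers
    rw [hmain, Polynomial.coeff_mul_X_pow', if_pos (Nat.le_add_right _ _),
      Nat.add_sub_cancel_left] at h0
    exact h0
  have hXp : (X : (ZMod p)[X]) ^ p ∣ u j₁ + f ^ h * v j₁ := Polynomial.X_pow_dvd_iff.mpr hcoeff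
  have hres := indep_core hodd S hS0 hSne hfn hD2 (u j₁) (v j₁) (hu j₁) (hv j₁) hXp
  rw [hbadset] at hj₁mem
  simp only [Finset.mem_filter] at hj₁mem
  exact hj₁mem.2 hres

/-! ### Coefficient-tuple polynomials -/

noncomputable def pol {R : Type*} [Semiring R] {d : ℕ} (c : Fin d → R) : R[X] :=
  ∑ i : Fin d, Polynomial.C (c i) * X ^ (i : ℕ)

lemma pol_add {R : Type*} [Semiring R] {d : ℕ} (c c' : Fin d → R) :
    pol (c + c') = pol c + pol c' := by
  unfold pol
  rw [← Finset.sum_add_distrib]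
  refine Finset.sum_congr rfl fun i _ => ?_
  simp [add_mul]

lemma pol_smul {R : Type*} [CommSemiring R] {d : ℕ} (a : R) (c : Fin d → R) :
    pol (a • c) = a • pol c := by
  unfold pol
  rw [Finset.smul_sum]
  refine Finset.sum_congr rfl fun i _ => ?_
  simp only [Pi.smul_apply, smul_eq_mul, Polynomial.smul_eq_C_mul, map_mul]
  ring

lemma pol_natDegree {R : Type*} [Semiring R] {d : ℕ} (c : Fin (d + 1) → R) :
    (pol c).natDegree ≤ d := by
  unfold pol
  apply Polynomial.natDegree_sum_le_of_forall_le
  intro i _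
  refine le_trans (natDegree_C_mul_le _ _) (le_trans (natDegree_X_pow_le _) ?_)
  omega

lemma pol_coeff {R : Type*} [Semiring R] {d : ℕ} (c : Fin d → R) (i : Fin d) :
    (pol c).coeff (i : ℕ) = c i := by
  unfold pol
  rw [Polynomial.finset_sum_coeff]
  rw [Finset.sum_eq_single i]
  · simp
  · intro j _ hne
    simp only [Polynomial.coeff_C_mul, Polynomial.coeff_X_pow]
    rw [if_neg, mul_zero]
    intro he
    exact hne (Fin.ext he.symm)
  · intro hmem; exact absurd (Finset.mem_univ _) hmem

/-! ### Stepanov bound -/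

theorem stepanov {n : ℕ} (hn : 1 ≤ n) (S : Finset (ZMod p)) (hS0 : (0 : ZMod p) ∉ S)
    (hSne : S.Nonempty) (hSn : S.card ≤ n) (hbig : 2 ^ (20 * (n + 1)) ≤ p) (ε : ZMod p) :
    MM n * (Finset.univ.filter fun a =>
        (∏ c ∈ S, (X + C c)).eval a ^ ((p - 1) / 2) = ε).card
      ≤ (JJ n - 1) * p + n * (MM n + (p - 1) / 2) + DD p n := by
  classical
  set h : ℕ := (p - 1) / 2 with hhdef
  set f : (ZMod p)[X] := ∏ c ∈ S, (X + C c) with hfdef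
  have hp2 : 2 < p := by
    have : (2:ℕ) = 2 ^ 1 := by norm_num
    have h2 : (2:ℕ) ^ 1 < 2 ^ (20 * (n + 1)) := Nat.pow_lt_pow_right one_lt_two (by omega)
    omega
  have hodd : p % 2 = 1 :=
    Nat.odd_iff.mp ((Fact.out : p.Prime).odd_of_ne_two (by omega))
  have hfmonic : f.Monic := monic_prod_of_monic _ _ fun c _ => monic_X_add_C c
  have hfne : f ≠ 0 := hfmonic.ne_zero
  have hfdeg : f.natDegree = S.card := by
    rw [hfdef, natDegree_prod_of_monic _ _ fun c _ => monic_X_add_C c]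
    simp [natDegree_X_add_C]
  have hfdegn : f.natDegree ≤ n := hfdeg ▸ hSn
  have hMp : MM n < p := MM_lt_p hbig
  have hMpos : 0 < MM n := MM_pos n
  have hJpos : 1 ≤ JJ n := JJ_pos n
  have hD2 := twoDD_add_n_lt (p := p) (n := n) hbig
  -- the coefficient spaces
  set Vty := ((Fin (JJ n) ⊕ Fin (JJ n)) × Fin (DD p n + 1)) → ZMod p with hVty
  set Wty := (Fin (MM n) × Fin (EE p n)) → ZMod p with hWty
  let uu : Vty → Fin (JJ n) → (ZMod p)[X] := fun x j => pol (fun i => x (Sum.inl j, i))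
  let vv : Vty → Fin (JJ n) → (ZMod p)[X] := fun x j => pol (fun i => x (Sum.inr j, i))
  let Wk : Vty → ℕ → (ZMod p)[X] := fun x k =>
    ∑ j : Fin (JJ n), X ^ (j : ℕ) *
      (phi f (MM n) k (uu x j) + C ε * phi f (MM n + h) k (vv x j))
  have Wk_add : ∀ x y k, Wk (x + y) k = Wk x k + Wk y k := by
    intro x y k
    simp only [Wk]
    rw [← Finset.sum_add_distrib]
    refine Finset.sum_congr rfl fun j _ => ?_
    have hu : uu (x + y) j = uu x j + uu y j := by
      simp only [uu]; rw [← pol_add]; rfl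
    have hv : vv (x + y) j = vv x j + vv y j := by
      simp only [vv]; rw [← pol_add]; rfl
    rw [hu, hv, phi_add, phi_add]
    ring
  have Wk_smul : ∀ (a : ZMod p) x k, Wk (a • x) k = a • Wk x k := by
    intro a x k
    simp only [Wk]
    rw [Finset.smul_sum]
    refine Finset.sum_congr rfl fun j _ => ?_
    have hu : uu (a • x) j = a • uu x j := by simp only [uu]; rw [← pol_smul]; rfl
    have hv : vv (a • x) j = a • vv x j := by simp only [vv]; rw [← pol_smul]; rfl
    rw [hu, hv, phi_smul, phi_smul, smul_eq_C_mul, smul_eq_C_mul, smul_eq_C_mul]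
    ring
  let T : Vty →ₗ[ZMod p] Wty :=
    { toFun := fun x ke => (Wk x ke.1).coeff ke.2
      map_add' := by
        intro x y; funext ke
        show (Wk (x + y) ke.1).coeff ke.2 = (Wk x ke.1).coeff ke.2 + (Wk y ke.1).coeff ke.2
        rw [Wk_add, Polynomial.coeff_add]
      map_smul' := by
        intro a x; funext ke
        show (Wk (a • x) ke.1).coeff ke.2 = a * (Wk x ke.1).coeff ke.2
        rw [Wk_smul, Polynomial.coeff_smul, smul_eq_mul] }
  have hfinW : finrank (ZMod p) Wty < finrank (ZMod p) Vty := by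
    show finrank (ZMod p) ((Fin (MM n) × Fin (EE p n)) → ZMod p)
      < finrank (ZMod p) (((Fin (JJ n) ⊕ Fin (JJ n)) × Fin (DD p n + 1)) → ZMod p)
    rw [Module.finrank_fintype_fun_eq_card, Module.finrank_fintype_fun_eq_card]
    simp only [Fintype.card_prod, Fintype.card_sum, Fintype.card_fin]
    exact dim_ineq hn hbig
  have hker := LinearMap.ker_ne_bot_of_finrank_lt (f := T) hfinW
  rw [Submodule.ne_bot_iff] at hker
  obtain ⟨x, hxker, hx0⟩ := hker
  rw [LinearMap.mem_ker] at hxker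
  -- the syzygies
  have hWk0 : ∀ k, k < MM n → Wk x k = 0 := by
    intro k hk
    have hkn : k * n ≤ MM n * n := Nat.mul_le_mul_right n (le_of_lt hk)
    have hdegW : (Wk x k).natDegree ≤ JJ n - 1 + (DD p n + k * n) := by
      apply Polynomial.natDegree_sum_le_of_forall_le
      intro j _
      refine le_trans natDegree_mul_le ?_
      rw [natDegree_X_pow]
      have h1 : (phi f (MM n) k (uu x j)).natDegree ≤ DD p n + k * n := by
        refine le_trans (phi_natDegree f (MM n) k _ (DD p n) (pol_natDegree _)) ?_
        have : k * f.natDegree ≤ k * n := Nat.mul_le_mul_left k hfdegn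
        omega
      have h2 : (C ε * phi f (MM n + h) k (vv x j)).natDegree ≤ DD p n + k * n := by
        refine le_trans (natDegree_C_mul_le _ _) ?_
        refine le_trans (phi_natDegree f (MM n + h) k _ (DD p n) (pol_natDegree _)) ?_
        have : k * f.natDegree ≤ k * n := Nat.mul_le_mul_left k hfdegn
        omega
      have h3 : (phi f (MM n) k (uu x j) + C ε * phi f (MM n + h) k (vv x j)).natDegree
          ≤ DD p n + k * n := le_trans (natDegree_add_le _ _) (max_le h1 h2)
      have h4 : (j : ℕ) ≤ JJ n - 1 := by have := j.isLt; omega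
      omega
    have hdeg : (Wk x k).natDegree < EE p n := by
      have : JJ n - 1 + (DD p n + k * n) < JJ n + DD p n + MM n * n + 1 := by
        have e1 : EE p n = JJ n + DD p n + MM n * n + 1 := rfl
        omega
      have e1 : EE p n = JJ n + DD p n + MM n * n + 1 := rfl
      omega
    apply Polynomial.ext
    intro m
    rw [Polynomial.coeff_zero]
    by_cases hm : m < EE p n
    · have := congrFun hxker (⟨k, hk⟩, ⟨m, hm⟩)
      exact this
    · exact Polynomial.coeff_eq_zero_of_natDegree_lt (lt_of_lt_of_le hdeg (le_of_not_gt hm))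
  -- the auxiliary polynomial
  set F : (ZMod p)[X] := ∑ j : Fin (JJ n),
      (f ^ MM n * uu x j + f ^ (MM n + h) * vv x j) * X ^ ((j : ℕ) * p) with hFdef
  have hFne : F ≠ 0 := by
    intro hF0
    have hfac : F = f ^ MM n *
        ∑ j : Fin (JJ n), (uu x j + f ^ h * vv x j) * X ^ ((j : ℕ) * p) := by
      rw [hFdef, Finset.mul_sum]
      refine Finset.sum_congr rfl fun j _ => ?_
      rw [pow_add]
      ring
    rw [hfac] at hF0
    rcases mul_eq_zero.mp hF0 with h' | h'
    · exact pow_ne_zero _ hfne h'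
    · have hall := indep hodd S hS0 hSne hSn hD2 (uu x) (vv x)
        (fun j => pol_natDegree _) (fun j => pol_natDegree _) h'
      apply hx0
      funext e
      obtain ⟨je, ie⟩ := e
      have hz : (0 : Vty) (je, ie) = 0 := rfl
      rw [hz]
      rcases je with j | j
      · have h1 := (hall j).1
        have hc := pol_coeff (fun i => x (Sum.inl j, i)) ie
        rw [show pol (fun i => x (Sum.inl j, i)) = uu x j from rfl, h1] at hc
        simpa using hc.symm
      · have h1 := (hall j).2
        have hc := pol_coeff (fun i => x (Sum.inr j, i)) ie
        rw [show pol (fun i => x (Sum.inr j, i)) = vv x j from rfl, h1] at hc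
        simpa using hc.symm
  -- vanishing to high order on A
  set A : Finset (ZMod p) := Finset.univ.filter (fun a => f.eval a ^ h = ε) with hAdef
  have hvan : ∀ a ∈ A, (X - C a) ^ MM n ∣ F := by
    intro a ha
    have haε : f.eval a ^ h = ε := by
      rw [hAdef] at ha
      exact (Finset.mem_filter.mp ha).2
    apply pow_X_sub_C_dvd_of_hasse
    intro k hk
    have hkp : k < p := lt_trans hk hMp
    have hstep : hasseDeriv k F = ∑ j : Fin (JJ n),
        (f ^ (MM n - k) * phi f (MM n) k (uu x j)
          + f ^ (MM n + h - k) * phi f (MM n + h) k (vv x j)) * X ^ ((j : ℕ) * p) := by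
      rw [hFdef, map_sum]
      refine Finset.sum_congr rfl fun j _ => ?_
      rw [hasseDeriv_mul_X_pow_block _ k _ hkp, map_add,
        phi_hasse f (MM n) k (le_of_lt hk) hkp,
        phi_hasse f (MM n + h) k (by omega) hkp]
    rw [hstep, Polynomial.eval_finset_sum]
    have hterm : ∀ j : Fin (JJ n), ((f ^ (MM n - k) * phi f (MM n) k (uu x j)
        + f ^ (MM n + h - k) * phi f (MM n + h) k (vv x j)) * X ^ ((j : ℕ) * p)).eval a
        = f.eval a ^ (MM n - k) *
          (((phi f (MM n) k (uu x j)).eval a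
            + ε * (phi f (MM n + h) k (vv x j)).eval a) * a ^ (j : ℕ)) := by
      intro j
      have hXp : a ^ ((j : ℕ) * p) = a ^ (j : ℕ) := by
        rw [pow_mul, ZMod.pow_card]
      have hpow2 : f.eval a ^ (MM n + h - k) = f.eval a ^ (MM n - k) * ε := by
        rw [show MM n + h - k = (MM n - k) + h by omega, pow_add, haε]
      simp only [eval_mul, eval_add, eval_pow, eval_X]
      rw [hXp, hpow2]
      ring
    have hsum2 : (∑ j : Fin (JJ n), ((f ^ (MM n - k) * phi f (MM n) k (uu x j)
          + f ^ (MM n + h - k) * phi f (MM n + h) k (vv x j)) * X ^ ((j : ℕ) * p)).eval a)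
        = f.eval a ^ (MM n - k) * (Wk x k).eval a := by
      have hWkeval : (Wk x k).eval a = ∑ j : Fin (JJ n), (((phi f (MM n) k (uu x j)).eval a
          + ε * (phi f (MM n + h) k (vv x j)).eval a) * a ^ (j : ℕ)) := by
        simp only [Wk]
        rw [Polynomial.eval_finset_sum]
        refine Finset.sum_congr rfl fun j _ => ?_
        simp only [eval_mul, eval_add, eval_pow, eval_X, eval_C]
        ring
      rw [hWkeval, Finset.mul_sum]
      refine Finset.sum_congr rfl fun j _ => ?_
      rw [hterm j]
    rw [hsum2, hWk0 k hk]
    simp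
  have hpair : (↑A : Set (ZMod p)).Pairwise (Function.onFun IsCoprime fun a => (X - C a) ^ MM n) := by
    intro a _ b _ hab
    exact (Polynomial.isCoprime_X_sub_C_of_isUnit_sub
      (isUnit_iff_ne_zero.mpr (sub_ne_zero.mpr hab))).pow
  have hproddvd := Finset.prod_dvd_of_coprime hpair (fun a ha => hvan a ha)
  have hdegprod : (∏ a ∈ A, (X - C a) ^ MM n).natDegree = A.card * MM n := by
    rw [Polynomial.natDegree_prod _ _ (fun a _ => pow_ne_zero _ (X_sub_C_ne_zero a))]
    simp [natDegree_pow, natDegree_X_sub_C, Finset.sum_const, smul_eq_mul]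
  have hdegF : F.natDegree ≤ (JJ n - 1) * p + n * (MM n + h) + DD p n := by
    rw [hFdef]
    apply Polynomial.natDegree_sum_le_of_forall_le
    intro j _
    refine le_trans natDegree_mul_le ?_
    rw [natDegree_X_pow]
    have hb1 : (f ^ MM n * uu x j).natDegree ≤ n * (MM n + h) + DD p n := by
      refine le_trans natDegree_mul_le ?_
      have e1 : (f ^ MM n).natDegree ≤ MM n * f.natDegree := natDegree_pow_le
      have e2 : MM n * f.natDegree ≤ (MM n + h) * n := by
        calc MM n * f.natDegree ≤ MM n * n := Nat.mul_le_mul_left _ hfdegn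
          _ ≤ (MM n + h) * n := Nat.mul_le_mul_right _ (by omega)
      have e3 : (MM n + h) * n = n * (MM n + h) := by ring
      have e4 : (uu x j).natDegree ≤ DD p n := pol_natDegree _
      omega
    have hb2 : (f ^ (MM n + h) * vv x j).natDegree ≤ n * (MM n + h) + DD p n := by
      refine le_trans natDegree_mul_le ?_
      have e1 : (f ^ (MM n + h)).natDegree ≤ (MM n + h) * f.natDegree := natDegree_pow_le
      have e2 : (MM n + h) * f.natDegree ≤ (MM n + h) * n := Nat.mul_le_mul_left _ hfdegn
      have e3 : (MM n + h) * n = n * (MM n + h) := by ring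
      have e4 : (vv x j).natDegree ≤ DD p n := pol_natDegree _
      omega
    have hb3 : (f ^ MM n * uu x j + f ^ (MM n + h) * vv x j).natDegree
        ≤ n * (MM n + h) + DD p n := le_trans (natDegree_add_le _ _) (max_le hb1 hb2)
    have hb4 : (j : ℕ) * p ≤ (JJ n - 1) * p :=
      Nat.mul_le_mul_right _ (by have := j.isLt; omega)
    omega
  have hlast := Polynomial.natDegree_le_of_dvd hproddvd hFne
  rw [hdegprod] at hlast
  calc MM n * A.card = A.card * MM n := by ring
    _ ≤ F.natDegree := hlast
    _ ≤ _ := hdegF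

/-! ### Counting and the run of squares -/

lemma chi_sum_bound {n : ℕ} (hn : 1 ≤ n) (hbig : 2 ^ (20 * (n + 1)) ≤ p)
    (S : Finset (ZMod p)) (hS0 : (0 : ZMod p) ∉ S) (hSne : S.Nonempty) (hSn : S.card ≤ n) :
    |(MM n : ℤ) * ∑ a : ZMod p, (quadraticChar (ZMod p)) ((∏ c ∈ S, (X + C c)).eval a)|
      ≤ ((n : ℤ) + 1) * p + 3 * n * MM n := by
  set h : ℕ := (p - 1) / 2 with hhdef
  set f : (ZMod p)[X] := ∏ c ∈ S, (X + C c) with hfdef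
  have hp2 : 2 < p := by
    have h2 : (2:ℕ) ^ 1 < 2 ^ (20 * (n + 1)) := Nat.pow_lt_pow_right one_lt_two (by omega)
    omega
  haveI : Fact (2 < p) := ⟨hp2⟩
  have hodd : p % 2 = 1 := Nat.odd_iff.mp ((Fact.out : p.Prime).odd_of_ne_two (by omega))
  have hh1 : 1 ≤ h := by omega
  have hfmonic : f.Monic := monic_prod_of_monic _ _ fun c _ => monic_X_add_C c
  have hfne : f ≠ 0 := hfmonic.ne_zero
  have hfdeg : f.natDegree = S.card := by
    rw [hfdef, natDegree_prod_of_monic _ _ fun c _ => monic_X_add_C c]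
    simp [natDegree_X_add_C]
  have hfdegn : f.natDegree ≤ n := hfdeg ▸ hSn
  set A1 : Finset (ZMod p) := Finset.univ.filter (fun a => f.eval a ^ h = 1) with hA1
  set A2 : Finset (ZMod p) := Finset.univ.filter (fun a => f.eval a ^ h = -1) with hA2
  set A0 : Finset (ZMod p) := Finset.univ.filter (fun a => f.eval a = 0) with hA0
  have hne10 : (1 : ZMod p) ≠ -1 := fun h1 => ZMod.neg_one_ne_one h1.symm
  have hzero_pow : (0 : ZMod p) ^ h = 0 := zero_pow (by omega)
  have key : ∀ a : ZMod p, f.eval a = 0 ∨ f.eval a ^ h = 1 ∨ f.eval a ^ h = -1 := by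
    intro a
    by_cases h0 : f.eval a = 0
    · exact Or.inl h0
    · right
      have hx2 : (f.eval a ^ h) ^ 2 = 1 := by
        rw [← pow_mul, show h * 2 = p - 1 by omega]
        exact ZMod.pow_card_sub_one_eq_one h0
      have hfact : (f.eval a ^ h - 1) * (f.eval a ^ h + 1) = 0 := by linear_combination hx2
      rcases mul_eq_zero.mp hfact with h' | h'
      · exact Or.inl (by linear_combination h')
      · exact Or.inr (by linear_combination h')
  have hd12 : Disjoint A1 A2 := by
    rw [Finset.disjoint_left]
    intro a ha1 ha2
    rw [hA1, Finset.mem_filter] at ha1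
    rw [hA2, Finset.mem_filter] at ha2
    exact hne10 (ha1.2.symm.trans ha2.2)
  have hd10 : Disjoint A1 A0 := by
    rw [Finset.disjoint_left]
    intro a ha1 ha0
    rw [hA1, Finset.mem_filter] at ha1
    rw [hA0, Finset.mem_filter] at ha0
    rw [ha0.2, hzero_pow] at ha1
    exact one_ne_zero ha1.2.symm
  have hd20 : Disjoint A2 A0 := by
    rw [Finset.disjoint_left]
    intro a ha2 ha0
    rw [hA2, Finset.mem_filter] at ha2
    rw [hA0, Finset.mem_filter] at ha0
    rw [ha0.2, hzero_pow] at ha2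
    exact (neg_ne_zero.mpr (one_ne_zero)) ha2.2.symm
  have hcover : A1 ∪ A2 ∪ A0 = Finset.univ := by
    ext a
    simp only [Finset.mem_union, hA1, hA2, hA0, Finset.mem_filter, Finset.mem_univ, true_and,
      iff_true]
    rcases key a with h' | h' | h' <;> tauto
  have hcards : A1.card + A2.card + A0.card = p := by
    have h1 : (A1 ∪ A2).card = A1.card + A2.card := Finset.card_union_of_disjoint hd12
    have h2 : ((A1 ∪ A2) ∪ A0).card = (A1 ∪ A2).card + A0.card :=
      Finset.card_union_of_disjoint (Finset.disjoint_union_left.mpr ⟨hd10, hd20⟩)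
    rw [hcover, Finset.card_univ, ZMod.card] at h2
    omega
  have hN0 : A0.card ≤ n := by
    have hsub : A0 ⊆ f.roots.toFinset := by
      intro a ha
      rw [hA0, Finset.mem_filter] at ha
      rw [Multiset.mem_toFinset, Polynomial.mem_roots hfne]
      exact ha.2
    calc A0.card ≤ f.roots.toFinset.card := Finset.card_le_card hsub
      _ ≤ Multiset.card f.roots := f.roots.toFinset_card_le
      _ ≤ f.natDegree := f.card_roots'
      _ ≤ n := hfdegn
  have hpdiv : p / 2 = h := by omega
  have hQ1 : ∀ a ∈ A1, (quadraticChar (ZMod p)) (f.eval a) = 1 := by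
    intro a ha
    rw [hA1, Finset.mem_filter] at ha
    have ha0 : f.eval a ≠ 0 := by
      intro h0; rw [h0, hzero_pow] at ha; exact one_ne_zero ha.2.symm
    have hsq : IsSquare (f.eval a) := by
      rw [ZMod.euler_criterion p ha0, hpdiv]
      exact ha.2
    exact (quadraticChar_one_iff_isSquare ha0).mpr hsq
  have hQ2 : ∀ a ∈ A2, (quadraticChar (ZMod p)) (f.eval a) = -1 := by
    intro a ha
    rw [hA2, Finset.mem_filter] at ha
    have ha0 : f.eval a ≠ 0 := by
      intro h0; rw [h0, hzero_pow] at ha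
      exact (neg_ne_zero.mpr (one_ne_zero)) ha.2.symm
    have hnot1 : (quadraticChar (ZMod p)) (f.eval a) ≠ 1 := by
      intro h1
      have hsq := (quadraticChar_one_iff_isSquare ha0).mp h1
      rw [ZMod.euler_criterion p ha0, hpdiv] at hsq
      exact hne10 (hsq.symm.trans ha.2)
    rcases quadraticChar_dichotomy ha0 with h' | h'
    · exact absurd h' hnot1
    · exact h'
  have hQ0 : ∀ a ∈ A0, (quadraticChar (ZMod p)) (f.eval a) = 0 := by
    intro a ha
    rw [hA0, Finset.mem_filter] at ha
    rw [ha.2]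
    exact quadraticChar_eq_zero_iff.mpr rfl
  have hTsum : (∑ a : ZMod p, (quadraticChar (ZMod p)) (f.eval a))
      = (A1.card : ℤ) - A2.card := by
    rw [show (Finset.univ : Finset (ZMod p)) = A1 ∪ A2 ∪ A0 from hcover.symm]
    rw [Finset.sum_union (Finset.disjoint_union_left.mpr ⟨hd10, hd20⟩),
      Finset.sum_union hd12]
    rw [Finset.sum_congr rfl hQ1, Finset.sum_congr rfl hQ2, Finset.sum_congr rfl hQ0]
    simp [Finset.sum_const, sub_eq_add_neg]
  have hst1 := stepanov hn S hS0 hSne hSn hbig 1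
  have hst2 := stepanov hn S hS0 hSne hSn hbig (-1 : ZMod p)
  obtain ⟨J'', hJ''⟩ : ∃ j, JJ n = j + 1 := ⟨JJ n - 1, by have := JJ_pos n; omega⟩
  have hMJ : MM n = 2 * J'' := by unfold MM; omega
  set R : ℕ := (JJ n - 1) * p + n * (MM n + h) + DD p n with hR
  have hID : 2 * R + MM n * n + n = MM n * p + n * p + 3 * n * MM n + 2 * DD p n := by
    have h2h : 2 * h + 1 = p := by omega
    rw [hR, hJ'', hMJ, ← h2h]
    simp only [Nat.add_sub_cancel]
    ring
  have hDp : 2 * DD p n ≤ p := twoDD_le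
  have hst1' : MM n * A1.card ≤ R := by rw [hA1]; exact hst1
  have hst2' : MM n * A2.card ≤ R := by rw [hA2]; exact hst2
  have c1 : (MM n : ℤ) * A1.card ≤ R := by exact_mod_cast hst1'
  have c2 : (MM n : ℤ) * A2.card ≤ R := by exact_mod_cast hst2'
  have c3 : (A1.card : ℤ) + A2.card + A0.card = p := by exact_mod_cast hcards
  have c4 : (A0.card : ℤ) ≤ n := by exact_mod_cast hN0
  have c5 : 2 * (R : ℤ) + (MM n : ℤ) * n + n
      = (MM n : ℤ) * p + (n : ℤ) * p + 3 * n * MM n + 2 * DD p n := by exact_mod_cast hID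
  have c6 : 2 * (DD p n : ℤ) ≤ p := by exact_mod_cast hDp
  have c7 : (0 : ℤ) ≤ (MM n : ℤ) := by positivity
  have c3' : (MM n : ℤ) * A1.card + (MM n : ℤ) * A2.card + (MM n : ℤ) * A0.card
      = (MM n : ℤ) * p := by linear_combination (MM n : ℤ) * c3
  have c4' : (MM n : ℤ) * A0.card ≤ (MM n : ℤ) * n := mul_le_mul_of_nonneg_left c4 c7
  have hnp : ((n : ℤ) + 1) * p = (n : ℤ) * p + p := by ring
  rw [hTsum, abs_le]
  have hexp : (MM n : ℤ) * ((A1.card : ℤ) - A2.card)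
      = (MM n : ℤ) * A1.card - (MM n : ℤ) * A2.card := by ring
  constructor
  · rw [hexp]; linarith
  · rw [hexp]; linarith

theorem exists_run (n : ℕ) (hn : 1 ≤ n) (hbig : 2 ^ (20 * (n + 1)) ≤ p) :
    ∃ x : ZMod p, ∀ i : ℕ, i < n → IsSquare (x + ((i + 1 : ℕ) : ZMod p)) := by
  have hp2 : 2 < p := by
    have h2 : (2:ℕ) ^ 1 < 2 ^ (20 * (n + 1)) := Nat.pow_lt_pow_right one_lt_two (by omega)
    omega
  have hnp : n + 1 < p := by
    have h1 := succ_le_two_pow n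
    have h2 : (2:ℕ) ^ n < 2 ^ (20 * (n + 1)) := Nat.pow_lt_pow_right one_lt_two (by omega)
    omega
  set χ := quadraticChar (ZMod p) with hchidef
  set G : Finset ℕ → ℤ :=
    fun t => ∑ x : ZMod p, ∏ i ∈ t, χ (x + ((i + 1 : ℕ) : ZMod p)) with hG
  have hexpand : ∀ x : ZMod p, ∏ i ∈ Finset.range n, (1 + χ (x + ((i + 1 : ℕ) : ZMod p)))
      = ∑ t ∈ (Finset.range n).powerset, ∏ i ∈ t, χ (x + ((i + 1 : ℕ) : ZMod p)) := by
    intro x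
    have hpa := Finset.prod_add (fun i => χ (x + ((i + 1 : ℕ) : ZMod p)))
      (fun _ => (1 : ℤ)) (Finset.range n)
    simp only [Finset.prod_const_one, mul_one] at hpa
    rw [← hpa]
    refine Finset.prod_congr rfl fun i _ => ?_
    ring
  set Stot : ℤ := ∑ x : ZMod p, ∏ i ∈ Finset.range n, (1 + χ (x + ((i + 1 : ℕ) : ZMod p)))
    with hStot
  have hswap : Stot = ∑ t ∈ (Finset.range n).powerset, G t := by
    rw [hStot, Finset.sum_congr rfl fun x _ => hexpand x, Finset.sum_comm]
  have hGbound : ∀ t ∈ (Finset.range n).powerset, t ≠ ∅ →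
      |(MM n : ℤ) * G t| ≤ ((n : ℤ) + 1) * p + 3 * n * MM n := by
    intro t ht htne
    have htsub := Finset.mem_powerset.mp ht
    set St : Finset (ZMod p) := t.image (fun i => ((i + 1 : ℕ) : ZMod p)) with hSt
    have hinj : Set.InjOn (fun i : ℕ => ((i + 1 : ℕ) : ZMod p)) t := by
      intro i hi j hj hij
      have hit : i < n := Finset.mem_range.mp (htsub hi)
      have hjt : j < n := Finset.mem_range.mp (htsub hj)
      have hival := ZMod.val_cast_of_lt (show i + 1 < p by omega)
      have hjval := ZMod.val_cast_of_lt (show j + 1 < p by omega)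
      have heq : (i + 1 : ℕ) = (j + 1 : ℕ) := by
        rw [← hival, ← hjval]
        exact congrArg ZMod.val hij
      omega
    have hSne : St.Nonempty := by
      rw [hSt]
      exact (Finset.image_nonempty).mpr (Finset.nonempty_of_ne_empty htne)
    have hS0 : (0 : ZMod p) ∉ St := by
      rw [hSt]
      intro hmem
      obtain ⟨i, hi, hival⟩ := Finset.mem_image.mp hmem
      have hit : i < n := Finset.mem_range.mp (htsub hi)
      have hne : ((i + 1 : ℕ) : ZMod p) ≠ 0 := by
        rw [Ne, ZMod.natCast_eq_zero_iff]
        intro hdvd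
        have := Nat.le_of_dvd (by omega) hdvd
        omega
      exact hne hival
    have hScard : St.card ≤ n := by
      rw [hSt, Finset.card_image_of_injOn hinj]
      calc t.card ≤ (Finset.range n).card := Finset.card_le_card htsub
        _ = n := Finset.card_range n
    have hGt : G t = ∑ a : ZMod p, χ ((∏ c ∈ St, (X + C c)).eval a) := by
      rw [hG]
      refine Finset.sum_congr rfl fun a _ => ?_
      rw [Polynomial.eval_prod, ← map_prod χ, hSt, Finset.prod_image hinj]
      refine congrArg χ (Finset.prod_congr rfl fun i _ => ?_)
      simp
    rw [hGt]
    exact chi_sum_bound hn hbig St hS0 hSne hScard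
  have hGempty : G ∅ = p := by
    rw [hG]
    simp [Finset.card_univ, ZMod.card]
  have hsplit : Stot = G ∅ + ∑ t ∈ (Finset.range n).powerset.erase ∅, G t := by
    rw [hswap, ← Finset.add_sum_erase _ _ (Finset.empty_mem_powerset _)]
  have hMpos := MM_pos n
  have hcarde : (((Finset.range n).powerset.erase ∅).card : ℤ) ≤ 2 ^ n := by
    have h1 : ((Finset.range n).powerset.erase ∅).card ≤ (Finset.range n).powerset.card :=
      Finset.card_le_card (Finset.erase_subset _ _)
    rw [Finset.card_powerset, Finset.card_range] at h1
    exact_mod_cast h1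
  have hB0 : (0 : ℤ) ≤ ((n : ℤ) + 1) * p + 3 * n * MM n := by positivity
  have hsum_lb : -((2 : ℤ) ^ n * (((n : ℤ) + 1) * p + 3 * n * MM n))
      ≤ ∑ t ∈ (Finset.range n).powerset.erase ∅, (MM n : ℤ) * G t := by
    have h1 : ∀ t ∈ (Finset.range n).powerset.erase ∅,
        -(((n : ℤ) + 1) * p + 3 * n * MM n) ≤ (MM n : ℤ) * G t := by
      intro t ht
      have ht' := Finset.mem_of_mem_erase ht
      have htne := Finset.ne_of_mem_erase ht
      have hb := abs_le.mp (hGbound t ht' htne)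
      linarith [hb.1]
    have h2 := Finset.sum_le_sum h1
    rw [Finset.sum_const, nsmul_eq_mul] at h2
    have h4 : -((2 : ℤ) ^ n * (((n : ℤ) + 1) * p + 3 * n * MM n))
        ≤ ((((Finset.range n).powerset.erase ∅).card : ℕ) : ℤ)
          * -(((n : ℤ) + 1) * p + 3 * n * MM n) := by
      nlinarith [mul_le_mul_of_nonneg_right hcarde hB0]
    exact le_trans h4 h2
  have hfin : (2 : ℤ) ^ n * (((n : ℤ) + 1) * p + 3 * n * MM n) < (MM n : ℤ) * p := by
    have := final_numeric hn hbig
    exact_mod_cast this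
  have hMStot : (MM n : ℤ) * Stot = (MM n : ℤ) * p
      + ∑ t ∈ (Finset.range n).powerset.erase ∅, (MM n : ℤ) * G t := by
    rw [hsplit, hGempty, mul_add, Finset.mul_sum]
  have hMStotpos : 0 < (MM n : ℤ) * Stot := by
    rw [hMStot]
    linarith
  have hStotpos : 0 < Stot := by
    by_contra hle
    push_neg at hle
    have : (MM n : ℤ) * Stot ≤ 0 :=
      mul_nonpos_of_nonneg_of_nonpos (by positivity) hle
    linarith
  have hStotne : Stot ≠ 0 := ne_of_gt hStotpos
  rw [hStot] at hStotne
  obtain ⟨x, -, hx⟩ := Finset.exists_ne_zero_of_sum_ne_zero hStotne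
  refine ⟨x, fun i hi => ?_⟩
  by_contra hns
  have hne0 : x + ((i + 1 : ℕ) : ZMod p) ≠ 0 := by
    intro h0
    exact hns (h0 ▸ (⟨0, by ring⟩ : IsSquare (0 : ZMod p)))
  have hchi1 : χ (x + ((i + 1 : ℕ) : ZMod p)) = -1 := by
    rcases quadraticChar_dichotomy hne0 with h' | h'
    · exact absurd ((quadraticChar_one_iff_isSquare hne0).mp h') hns
    · exact h'
  apply hx
  apply Finset.prod_eq_zero (Finset.mem_range.mpr hi)
  rw [hchi1]
  ring

end SqAP

open Pointwise

noncomputable def sqSumsetMin (R : Type*) [CommRing R] [DecidableEq R] (n : ℕ) : ℕ :=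
  sInf {k | ∃ A : Finset R, (∀ a ∈ A, IsSquare a) ∧ A.card = n ∧ (A + A).card = k}

/-- For `n ≥ 3` and a prime `p > 2^(2^(2^(2^(2^(9+n)))))`, we have `N_n(ℤ_p) = 2n - 1`. -/
theorem sqSumsetMin_zmod_large_prime (n : ℕ) (hn : 3 ≤ n) (p : ℕ) (hp : p.Prime)
    (hlarge : 2 ^ 2 ^ 2 ^ 2 ^ 2 ^ (9 + n) < p) :
    sqSumsetMin (ZMod p) n = 2 * n - 1 := by
  haveI : Fact p.Prime := ⟨hp⟩
  have lx : ∀ m : ℕ, m ≤ 2 ^ m := fun m => le_trans (Nat.le_succ m) (SqAP.succ_le_two_pow m)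
  have hbig : 2 ^ (20 * (n + 1)) ≤ p := by
    have e1 : 20 * (n + 1) ≤ 2 ^ (9 + n) := by
      have h1 := SqAP.succ_le_two_pow n
      calc 20 * (n + 1) ≤ 20 * 2 ^ n := Nat.mul_le_mul_left _ h1
        _ ≤ 512 * 2 ^ n := Nat.mul_le_mul_right _ (by norm_num)
        _ = 2 ^ (9 + n) := by rw [pow_add]; norm_num
    have e2 : 20 * (n + 1) ≤ 2 ^ 2 ^ 2 ^ 2 ^ (9 + n) := by
      calc 20 * (n + 1) ≤ 2 ^ (9 + n) := e1
        _ ≤ 2 ^ 2 ^ (9 + n) := lx _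
        _ ≤ 2 ^ 2 ^ 2 ^ (9 + n) := lx _
        _ ≤ 2 ^ 2 ^ 2 ^ 2 ^ (9 + n) := lx _
    calc 2 ^ (20 * (n + 1)) ≤ 2 ^ 2 ^ 2 ^ 2 ^ 2 ^ (9 + n) :=
          Nat.pow_le_pow_right (by norm_num) e2
      _ ≤ p := le_of_lt hlarge
  have hp2n : 2 * n + 2 < p := by
    have h1 : 2 * n + 2 < 20 * (n + 1) + 1 := by omega
    have h2 := SqAP.succ_le_two_pow (20 * (n + 1))
    omega
  obtain ⟨x, hx⟩ := SqAP.exists_run (p := p) n (by omega) hbig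
  set A : Finset (ZMod p) := (Finset.range n).image (fun i => x + ((i + 1 : ℕ) : ZMod p))
    with hA
  have hinj : Set.InjOn (fun i : ℕ => x + ((i + 1 : ℕ) : ZMod p)) (Finset.range n) := by
    intro i hi j hj hij
    have hi' : i < n := Finset.mem_range.mp hi
    have hj' : j < n := Finset.mem_range.mp hj
    have h1 : ((i + 1 : ℕ) : ZMod p) = ((j + 1 : ℕ) : ZMod p) := add_left_cancel hij
    have hival := ZMod.val_cast_of_lt (show i + 1 < p by omega)
    have hjval := ZMod.val_cast_of_lt (show j + 1 < p by omega)
    have : (i + 1 : ℕ) = (j + 1 : ℕ) := by rw [← hival, ← hjval, h1]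
    omega
  have hsq : ∀ a ∈ A, IsSquare a := by
    intro a ha
    rw [hA] at ha
    obtain ⟨i, hi, rfl⟩ := Finset.mem_image.mp ha
    exact hx i (Finset.mem_range.mp hi)
  have hcardA : A.card = n := by
    rw [hA, Finset.card_image_of_injOn hinj, Finset.card_range]
  have hAA : A + A = (Finset.range (2 * n - 1)).image
      (fun t => x + x + ((t + 2 : ℕ) : ZMod p)) := by
    ext b
    constructor
    · intro hb
      obtain ⟨c, hc, d, hd, rfl⟩ := Finset.mem_add.mp hb
      rw [hA] at hc hd
      obtain ⟨i, hi, rfl⟩ := Finset.mem_image.mp hc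
      obtain ⟨j, hj, rfl⟩ := Finset.mem_image.mp hd
      have hi' : i < n := Finset.mem_range.mp hi
      have hj' : j < n := Finset.mem_range.mp hj
      apply Finset.mem_image.mpr
      refine ⟨i + j, Finset.mem_range.mpr (by omega), ?_⟩
      push_cast
      ring
    · intro hb
      obtain ⟨t, ht, rfl⟩ := Finset.mem_image.mp hb
      have ht' : t < 2 * n - 1 := Finset.mem_range.mp ht
      obtain ⟨i, j, hi', hj', hij⟩ : ∃ i j, i < n ∧ j < n ∧ i + j = t :=
        ⟨min t (n - 1), t - min t (n - 1), by omega, by omega, by omega⟩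
      apply Finset.mem_add.mpr
      refine ⟨x + ((i + 1 : ℕ) : ZMod p),
        by rw [hA]; exact Finset.mem_image.mpr ⟨i, Finset.mem_range.mpr hi', rfl⟩,
        x + ((j + 1 : ℕ) : ZMod p),
        by rw [hA]; exact Finset.mem_image.mpr ⟨j, Finset.mem_range.mpr hj', rfl⟩, ?_⟩
      have he : (i + 1) + (j + 1) = t + 2 := by omega
      rw [← he]
      push_cast
      ring
  have hinj2 : Set.InjOn (fun t : ℕ => x + x + ((t + 2 : ℕ) : ZMod p))
      (Finset.range (2 * n - 1)) := by
    intro i hi j hj hij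
    have hi' : i < 2 * n - 1 := Finset.mem_range.mp hi
    have hj' : j < 2 * n - 1 := Finset.mem_range.mp hj
    have h1 : ((i + 2 : ℕ) : ZMod p) = ((j + 2 : ℕ) : ZMod p) := add_left_cancel hij
    have hival := ZMod.val_cast_of_lt (show i + 2 < p by omega)
    have hjval := ZMod.val_cast_of_lt (show j + 2 < p by omega)
    have : (i + 2 : ℕ) = (j + 2 : ℕ) := by rw [← hival, ← hjval, h1]
    omega
  have hcardAA : (A + A).card = 2 * n - 1 := by
    rw [hAA, Finset.card_image_of_injOn hinj2, Finset.card_range]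
  have hmem : (2 * n - 1) ∈ {k | ∃ A : Finset (ZMod p),
      (∀ a ∈ A, IsSquare a) ∧ A.card = n ∧ (A + A).card = k} :=
    ⟨A, hsq, hcardA, hcardAA⟩
  have hlow : ∀ k ∈ {k | ∃ A : Finset (ZMod p),
      (∀ a ∈ A, IsSquare a) ∧ A.card = n ∧ (A + A).card = k}, 2 * n - 1 ≤ k := by
    rintro k ⟨B, hBsq, hBcard, hBAA⟩
    have hBne : B.Nonempty := Finset.card_pos.mp (by omega)
    have hcd := ZMod.cauchy_davenport hp hBne hBne
    rw [hBcard] at hcd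
    rw [← hBAA]
    omega
  unfold sqSumsetMin
  exact le_antisymm (Nat.sInf_le hmem) (le_csInf ⟨_, hmem⟩ hlow)
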